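/- Let X be a normed quasi-algebra with Hausdorff metric h. If sequences (x_n), (y_n) in X satisfy h(x_n, x) → 0 and h(y_n, y) → 0, then h(x_n * y_n, x * y) → 0; that is, the product is continuous with respect to the Hausdorff metric. -/

import Mathlib

/-- A quasi-algebra in the sense of Aseev/Dehghanizade–Modarres: a partially
ordered set with addition, zero, real scalar multiplication and a product. -/
structure QuasiAlgebra (X : Type*) [PartialOrder X] where
  add : X → X → X
  zero : X
  smul : ℝ → X → X
  mul : X → X → X
  add_comm : ∀ x y, add x y = add y x
  add_assoc : ∀ x y z, add x (add y z) = add (add x y) z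
  add_zero : ∀ x, add x zero = x
  smul_smul : ∀ (α β : ℝ) (x : X), smul α (smul β x) = smul (α * β) x
  smul_add : ∀ (α : ℝ) (x y : X), smul α (add x y) = add (smul α x) (smul α y)
  one_smul : ∀ x, smul 1 x = x
  zero_smul : ∀ x, smul 0 x = zero
  add_smul_le : ∀ (α β : ℝ) (x : X), smul (α + β) x ≤ add (smul α x) (smul β x)
  add_le_add : ∀ {x y z v : X}, x ≤ y → z ≤ v → add x z ≤ add y v
  smul_le_smul : ∀ (α : ℝ) {x y : X}, x ≤ y → smul α x ≤ smul α y
  mul_assoc : ∀ x y z, mul x (mul y z) = mul (mul x y) z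
  smul_mul : ∀ (α : ℝ) (x y : X), smul α (mul x y) = mul (smul α x) y
  mul_smul : ∀ (α : ℝ) (x y : X), smul α (mul x y) = mul x (smul α y)
  zero_mul_zero : mul zero zero = zero
  mul_add_le : ∀ x y z, mul x (add y z) ≤ add (mul x y) (mul x z)
  add_mul_le : ∀ x y z, mul (add x y) z ≤ add (mul x z) (mul y z)
  mul_le_mul : ∀ {x y z v : X}, x ≤ y → z ≤ v → mul x z ≤ mul y v

namespace QuasiAlgebra

variable {X : Type*} [PartialOrder X]

/-- `-x = (-1)·x`. -/
def neg (Q : QuasiAlgebra X) (x : X) : X := Q.smul (-1) x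

/-- `x - y = x + (-y)`. -/
def sub (Q : QuasiAlgebra X) (x y : X) : X := Q.add x (Q.neg y)

/-- An element is regular if it has an additive inverse. -/
def Regular (Q : QuasiAlgebra X) (x : X) : Prop := ∃ x' : X, Q.add x x' = Q.zero

/-- A norm on a quasi-algebra. -/
structure Norm (Q : QuasiAlgebra X) where
  norm : X → ℝ
  norm_pos : ∀ {x : X}, x ≠ Q.zero → 0 < norm x
  norm_add : ∀ x y, norm (Q.add x y) ≤ norm x + norm y
  norm_smul : ∀ (α : ℝ) (x : X), norm (Q.smul α x) = |α| * norm x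
  norm_mul : ∀ x y, norm (Q.mul x y) ≤ norm x * norm y
  norm_mono : ∀ {x y : X}, x ≤ y → norm x ≤ norm y
  le_of_forall_eps : ∀ {x y : X},
    (∀ ε : ℝ, 0 < ε → ∃ z : X, x ≤ Q.add y z ∧ norm z ≤ ε) → x ≤ y

/-- The Hausdorff metric of a normed quasi-algebra. -/
noncomputable def hmet (Q : QuasiAlgebra X) (N : Q.Norm) (x y : X) : ℝ :=
  sInf {r : ℝ | 0 ≤ r ∧ ∃ a₁ a₂ : X,
    x ≤ Q.add y a₁ ∧ y ≤ Q.add x a₂ ∧ N.norm a₁ ≤ r ∧ N.norm a₂ ≤ r}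

end QuasiAlgebra

section Aux
variable {X : Type*} [PartialOrder X] (Q : QuasiAlgebra X) (N : Q.Norm)

lemma aux_norm_zero : N.norm Q.zero = 0 := by
  have h := N.norm_smul 0 Q.zero
  rw [Q.zero_smul] at h
  simpa using h

lemma aux_norm_nonneg (z : X) : 0 ≤ N.norm z := by
  by_cases h : z = Q.zero
  · rw [h, aux_norm_zero]
  · exact (N.norm_pos h).le

lemma aux_set_nonempty (x y : X) :
    {r : ℝ | 0 ≤ r ∧ ∃ a₁ a₂ : X,
      x ≤ Q.add y a₁ ∧ y ≤ Q.add x a₂ ∧ N.norm a₁ ≤ r ∧ N.norm a₂ ≤ r}.Nonempty := by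
  have key : ∀ u v : X, u ≤ Q.add v (Q.add u (Q.neg v)) := by
    intro u v
    have h0 : Q.zero ≤ Q.add v (Q.neg v) := by
      have := Q.add_smul_le 1 (-1) v
      rw [Q.one_smul] at this
      simpa [Q.zero_smul, QuasiAlgebra.neg] using this
    calc u = Q.add u Q.zero := (Q.add_zero u).symm
    _ ≤ Q.add u (Q.add v (Q.neg v)) := Q.add_le_add le_rfl h0
    _ = Q.add (Q.add u v) (Q.neg v) := Q.add_assoc _ _ _
    _ = Q.add (Q.add v u) (Q.neg v) := by rw [Q.add_comm u v]
    _ = Q.add v (Q.add u (Q.neg v)) := (Q.add_assoc _ _ _).symm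
  refine ⟨max (N.norm (Q.add x (Q.neg y))) (N.norm (Q.add y (Q.neg x))),
    le_trans (aux_norm_nonneg Q N _) (le_max_left _ _),
    Q.add x (Q.neg y), Q.add y (Q.neg x), key x y, key y x,
    le_max_left _ _, le_max_right _ _⟩

lemma aux_hmet_nonneg (x y : X) : 0 ≤ Q.hmet N x y :=
  le_csInf (aux_set_nonempty Q N x y) fun _ hr => hr.1

lemma aux_hmet_le {x y a₁ a₂ : X} {r : ℝ} (h1 : x ≤ Q.add y a₁) (h2 : y ≤ Q.add x a₂)
    (h3 : N.norm a₁ ≤ r) (h4 : N.norm a₂ ≤ r) : Q.hmet N x y ≤ r :=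
  csInf_le ⟨0, fun _ hr => hr.1⟩
    ⟨le_trans (aux_norm_nonneg Q N a₁) h3, a₁, a₂, h1, h2, h3, h4⟩

lemma aux_exists_witness {x y : X} {t : ℝ} (ht : Q.hmet N x y < t) :
    ∃ a₁ a₂ : X, x ≤ Q.add y a₁ ∧ y ≤ Q.add x a₂ ∧ N.norm a₁ ≤ t ∧ N.norm a₂ ≤ t := by
  obtain ⟨r, ⟨_, a₁, a₂, h1, h2, h3, h4⟩, hrt⟩ :=
    exists_lt_of_csInf_lt (aux_set_nonempty Q N x y) ht
  exact ⟨a₁, a₂, h1, h2, h3.trans hrt.le, h4.trans hrt.le⟩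

end Aux

/-- the product of a normed quasi-algebra is continuous with
respect to the Hausdorff metric. -/
theorem stmt_1 {X : Type*} [PartialOrder X] (Q : QuasiAlgebra X) (N : Q.Norm)
    (xs ys : ℕ → X) (x y : X)
    (hx : Filter.Tendsto (fun n => Q.hmet N (xs n) x) Filter.atTop (nhds 0))
    (hy : Filter.Tendsto (fun n => Q.hmet N (ys n) y) Filter.atTop (nhds 0)) :
    Filter.Tendsto (fun n => Q.hmet N (Q.mul (xs n) (ys n)) (Q.mul x y))
      Filter.atTop (nhds 0) := by
  rw [Metric.tendsto_atTop] at hx hy ⊢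
  intro ε hε
  set K : ℝ := N.norm x + N.norm y + 3 with hK
  have hxn := aux_norm_nonneg Q N x
  have hyn := aux_norm_nonneg Q N y
  have hKpos : 0 < K := by positivity
  set δ : ℝ := min 1 (ε / (2 * K)) with hδ
  have hδpos : 0 < δ := lt_min one_pos (by positivity)
  have hδ1 : δ ≤ 1 := min_le_left _ _
  have hδK : δ * K ≤ ε / 2 := by
    have : δ ≤ ε / (2 * K) := min_le_right _ _
    calc δ * K ≤ (ε / (2 * K)) * K := by nlinarith
    _ = ε / 2 := by field_simp
  obtain ⟨N1, hN1⟩ := hx δ hδpos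
  obtain ⟨N2, hN2⟩ := hy δ hδpos
  refine ⟨max N1 N2, fun n hn => ?_⟩
  have hx' : Q.hmet N (xs n) x < δ := by
    have := hN1 n (le_trans (le_max_left _ _) hn)
    rw [Real.dist_eq, sub_zero, abs_of_nonneg (aux_hmet_nonneg Q N _ _)] at this
    simpa using this
  have hy' : Q.hmet N (ys n) y < δ := by
    have := hN2 n (le_trans (le_max_right _ _) hn)
    rw [Real.dist_eq, sub_zero, abs_of_nonneg (aux_hmet_nonneg Q N _ _)] at this
    simpa using this
  obtain ⟨a₁, a₂, ha1, ha2, ha1n, ha2n⟩ := aux_exists_witness Q N hx'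
  obtain ⟨b₁, b₂, hb1, hb2, hb1n, hb2n⟩ := aux_exists_witness Q N hy'
  have ha1nn := aux_norm_nonneg Q N a₁
  have ha2nn := aux_norm_nonneg Q N a₂
  have hb1nn := aux_norm_nonneg Q N b₁
  have hb2nn := aux_norm_nonneg Q N b₂
  -- norms of xs n, ys n
  have hxsn : N.norm (xs n) ≤ N.norm x + δ :=
    le_trans (N.norm_mono ha1) (le_trans (N.norm_add _ _) (by linarith))
  have hysn : N.norm (ys n) ≤ N.norm y + δ :=
    le_trans (N.norm_mono hb1) (le_trans (N.norm_add _ _) (by linarith))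
  have hxsnn := aux_norm_nonneg Q N (xs n)
  have hysnn := aux_norm_nonneg Q N (ys n)
  -- generic expansion lemma
  have expand : ∀ u v a b : X,
      Q.mul (Q.add u a) (Q.add v b)
        ≤ Q.add (Q.mul u v) (Q.add (Q.mul a v) (Q.add (Q.mul u b) (Q.mul a b))) := by
    intro u v a b
    calc Q.mul (Q.add u a) (Q.add v b)
        ≤ Q.add (Q.mul u (Q.add v b)) (Q.mul a (Q.add v b)) := Q.add_mul_le _ _ _
    _ ≤ Q.add (Q.add (Q.mul u v) (Q.mul u b)) (Q.add (Q.mul a v) (Q.mul a b)) :=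
        Q.add_le_add (Q.mul_add_le _ _ _) (Q.mul_add_le _ _ _)
    _ = Q.add (Q.mul u v) (Q.add (Q.mul u b) (Q.add (Q.mul a v) (Q.mul a b))) :=
        (Q.add_assoc _ _ _).symm
    _ = Q.add (Q.mul u v) (Q.add (Q.mul a v) (Q.add (Q.mul u b) (Q.mul a b))) := by
        rw [Q.add_assoc (Q.mul u b), Q.add_comm (Q.mul u b), ← Q.add_assoc]
  set A₁ : X := Q.add (Q.mul a₁ y) (Q.add (Q.mul x b₁) (Q.mul a₁ b₁)) with hA1
  set A₂ : X := Q.add (Q.mul a₂ (ys n)) (Q.add (Q.mul (xs n) b₂) (Q.mul a₂ b₂)) with hA2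
  have key1 : Q.mul (xs n) (ys n) ≤ Q.add (Q.mul x y) A₁ :=
    le_trans (Q.mul_le_mul ha1 hb1) (expand x y a₁ b₁)
  have key2 : Q.mul x y ≤ Q.add (Q.mul (xs n) (ys n)) A₂ :=
    le_trans (Q.mul_le_mul ha2 hb2) (expand (xs n) (ys n) a₂ b₂)
  have normA1 : N.norm A₁ ≤ δ * K := by
    have h1 := N.norm_add (Q.mul a₁ y) (Q.add (Q.mul x b₁) (Q.mul a₁ b₁))
    have h2 := N.norm_add (Q.mul x b₁) (Q.mul a₁ b₁)
    have m1 := N.norm_mul a₁ y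
    have m2 := N.norm_mul x b₁
    have m3 := N.norm_mul a₁ b₁
    have : N.norm A₁ ≤ N.norm a₁ * N.norm y + (N.norm x * N.norm b₁ + N.norm a₁ * N.norm b₁) := by
      rw [hA1]; linarith
    nlinarith
  have normA2 : N.norm A₂ ≤ δ * K := by
    have h1 := N.norm_add (Q.mul a₂ (ys n)) (Q.add (Q.mul (xs n) b₂) (Q.mul a₂ b₂))
    have h2 := N.norm_add (Q.mul (xs n) b₂) (Q.mul a₂ b₂)
    have m1 := N.norm_mul a₂ (ys n)
    have m2 := N.norm_mul (xs n) b₂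
    have m3 := N.norm_mul a₂ b₂
    have : N.norm A₂ ≤ N.norm a₂ * N.norm (ys n)
        + (N.norm (xs n) * N.norm b₂ + N.norm a₂ * N.norm b₂) := by
      rw [hA2]; linarith
    nlinarith
  have hle : Q.hmet N (Q.mul (xs n) (ys n)) (Q.mul x y) ≤ δ * K :=
    aux_hmet_le Q N key1 key2 normA1 normA2
  rw [Real.dist_eq, sub_zero, abs_of_nonneg (aux_hmet_nonneg Q N _ _)]
  simpa using lt_of_le_of_lt hle (lt_of_le_of_lt hδK (by linarith))
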